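/- Let G be a complex semisimple Lie group, P, Q parabolic subgroups with P ∩ Q parabolic, and define the relation x ≈ y on G/P by: the set of s ∈ G/Q with x ∈ P_s equals the set of s with y ∈ P_s (i.e., Q_x = Q_y, where Q_x = q(p⁻¹(x))). Then ≈ is a G-equivariant equivalence relation, it holds iff ⋂_{x∈P_s} P_s = ⋂_{y∈P_s} P_s, and the quotient of G/P by ≈ is a rational homogeneous space G/P̃ where P̃ ⊇ P is the parabolic subgroup stabilizing the class of the base point (the reduction of P mod Q). -/

import Mathlib

open scoped Pointwise

/-- Surrogate definition of a parabolic subgroup of a (complex semisimple Lie) group: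
a closed subgroup with compact (projective) quotient. -/
def IsParabolic (G : Type*) [Group G] [TopologicalSpace G] (H : Subgroup G) : Prop :=
  IsClosed (H : Set G) ∧ CompactSpace (G ⧸ H)

/-- A `Q`-cycle in `G ⧸ P`: a `G`-translate of the `Q`-orbit of the base point `x₀ = 1·P`. -/
def IsQCycle (G : Type*) [Group G] (P Q : Subgroup G) (C : Set (G ⧸ P)) : Prop :=
  ∃ g : G, C = g • (MulAction.orbit Q ((1 : G) : G ⧸ P))

/-- The `Q`-cycle `P_s ⊆ G ⧸ P` associated to `s ∈ G ⧸ Q`. -/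
def cycleOf (G : Type*) [Group G] (P Q : Subgroup G) (s : G ⧸ Q) : Set (G ⧸ P) :=
  {x | ∃ g : G, (QuotientGroup.mk g : G ⧸ Q) = s ∧
        x ∈ g • (MulAction.orbit Q ((1 : G) : G ⧸ P))}

/-- The `P`-cycle `Q_x = q(p⁻¹(x)) ⊆ G ⧸ Q` of `x ∈ G ⧸ P`: it parametrizes the
`Q`-cycles through `x`. -/
def Pcyc (G : Type*) [Group G] (P Q : Subgroup G) (x : G ⧸ P) : Set (G ⧸ Q) :=
  {s | x ∈ cycleOf G P Q s}

section Aux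

variable {G : Type*} [Group G]

/-- The canonical map between coset spaces for nested subgroups. -/
def cosetMap (H K : Subgroup G) (hHK : H ≤ K) : G ⧸ H → G ⧸ K :=
  Quotient.map' id fun a b hab => by
    rw [QuotientGroup.leftRel_apply] at hab ⊢
    exact hHK hab

lemma cosetMap_mk (H K : Subgroup G) (hHK : H ≤ K) (g : G) :
    cosetMap H K hHK (QuotientGroup.mk g) = QuotientGroup.mk g := rfl

lemma continuous_cosetMap [TopologicalSpace G] (H K : Subgroup G) (hHK : H ≤ K) :
    Continuous (cosetMap H K hHK) :=
  (QuotientGroup.isQuotientMap_mk H).continuous_iff.mpr QuotientGroup.continuous_mk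

lemma surjective_cosetMap (H K : Subgroup G) (hHK : H ≤ K) :
    Function.Surjective (cosetMap H K hHK) := fun x =>
  QuotientGroup.induction_on x fun g => ⟨QuotientGroup.mk g, rfl⟩

lemma mk_eq_smul_one (P : Subgroup G) (g : G) :
    (QuotientGroup.mk g : G ⧸ P) = g • ((1 : G) : G ⧸ P) := by
  rw [MulAction.Quotient.smul_mk, smul_eq_mul, mul_one]

lemma pcyc_smul (P Q : Subgroup G) (g : G) (x : G ⧸ P) :
    Pcyc G P Q (g • x) = g • Pcyc G P Q x := by
  ext s
  simp only [Pcyc, cycleOf, Set.mem_setOf_eq, Set.mem_smul_set_iff_inv_smul_mem]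
  constructor
  · rintro ⟨h, rfl, hx⟩
    refine ⟨g⁻¹ * h, rfl, ?_⟩
    rw [mul_inv_rev, inv_inv, mul_smul]
    exact hx
  · rintro ⟨h, hh, hx⟩
    refine ⟨g * h, ?_, ?_⟩
    · rw [show ((g * h : G) : G ⧸ Q) = g • (QuotientGroup.mk h : G ⧸ Q) from rfl, hh,
        smul_inv_smul]
    · rw [mul_inv_rev, mul_smul, inv_smul_smul]
      exact hx

lemma pcyc_one (P Q : Subgroup G) :
    Pcyc G P Q ((1 : G) : G ⧸ P) = QuotientGroup.mk '' (P : Set G) := by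
  ext s
  simp only [Pcyc, cycleOf, Set.mem_setOf_eq, Set.mem_image, SetLike.mem_coe]
  constructor
  · rintro ⟨h, rfl, hx⟩
    rw [Set.mem_smul_set_iff_inv_smul_mem] at hx
    obtain ⟨q, hq⟩ := hx
    have hq0 : ((q : G)) • ((1 : G) : G ⧸ P) = h⁻¹ • ((1 : G) : G ⧸ P) := hq
    have hq' : (((q : G)) : G ⧸ P) = ((h⁻¹ : G) : G ⧸ P) := by
      rw [mk_eq_smul_one P (q : G), mk_eq_smul_one P h⁻¹]
      exact hq0
    have hmem : ((q : G))⁻¹ * h⁻¹ ∈ P := QuotientGroup.eq.mp hq'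
    have hinv : (h * (q : G))⁻¹ ∈ P := by rwa [mul_inv_rev]
    refine ⟨h * (q : G), P.inv_mem_iff.mp hinv, ?_⟩
    exact QuotientGroup.mk_mul_of_mem h q.2
  · rintro ⟨p, hp, rfl⟩
    refine ⟨p, rfl, ?_⟩
    rw [Set.mem_smul_set_iff_inv_smul_mem]
    refine ⟨1, ?_⟩
    have h1 : ((1 : G) : G ⧸ P) = ((p⁻¹ : G) : G ⧸ P) :=
      QuotientGroup.eq.mpr (show (1 : G)⁻¹ * p⁻¹ ∈ P by simpa using hp)
    show ((1 : Q) : G) • ((1 : G) : G ⧸ P) = p⁻¹ • ((1 : G) : G ⧸ P)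
    rw [Subgroup.coe_one, one_smul, ← mk_eq_smul_one]
    exact h1

lemma t2_coset [TopologicalSpace G] [IsTopologicalGroup G] (Q : Subgroup G)
    (hQ : IsClosed (Q : Set G)) : T2Space (G ⧸ Q) := by
  rw [t2_iff_isClosed_diagonal]
  have h := (QuotientGroup.isOpenQuotientMap_mk (N := Q)).prodMap
    (QuotientGroup.isOpenQuotientMap_mk (N := Q))
  rw [← h.isQuotientMap.isClosed_preimage]
  have heq : Prod.map (QuotientGroup.mk : G → G ⧸ Q) QuotientGroup.mk ⁻¹'
      Set.diagonal (G ⧸ Q) = (fun p : G × G => p.1⁻¹ * p.2) ⁻¹' (Q : Set G) := by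
    ext p
    simp only [Set.mem_preimage, Set.mem_diagonal_iff, Prod.map_fst, Prod.map_snd,
      SetLike.mem_coe]
    exact QuotientGroup.eq
  rw [heq]
  exact hQ.preimage ((continuous_fst.inv).mul continuous_snd)

end Aux

/-- The relation `x ≈ y ⟺ Q_x = Q_y` on `G ⧸ P` is a `G`-equivariant equivalence
relation, it holds iff `⋂_{x ∈ P_s} P_s = ⋂_{y ∈ P_s} P_s`, and the quotient of `G ⧸ P`
by `≈` is the rational homogeneous space `G ⧸ P̃`, where `P̃ ⊇ P` is the parabolic
subgroup stabilizing the class of the base point (the reduction of `P` mod `Q`). -/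
theorem stmt19 (G : Type*) [Group G] [TopologicalSpace G] [IsTopologicalGroup G]
    (P Q : Subgroup G)
    (hP : IsParabolic G P) (hQ : IsParabolic G Q) (hPQ : IsParabolic G (P ⊓ Q))
    (P' : Subgroup G)
    (hP' : P' = MulAction.stabilizer G (Pcyc G P Q ((1 : G) : G ⧸ P))) :
    -- `≈` is `G`-equivariant (it is an equivalence relation since it is an equality):
    (∀ (g : G) (x y : G ⧸ P),
        Pcyc G P Q x = Pcyc G P Q y ↔ Pcyc G P Q (g • x) = Pcyc G P Q (g • y)) ∧
    -- `x ≈ y` iff the intersections of all `Q`-cycles through `x` resp. `y` agree: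
    (∀ x y : G ⧸ P,
        Pcyc G P Q x = Pcyc G P Q y ↔
          (⋂ s ∈ Pcyc G P Q x, cycleOf G P Q s) = ⋂ s ∈ Pcyc G P Q y, cycleOf G P Q s) ∧
    -- `P̃` is a parabolic subgroup containing `P`:
    P ≤ P' ∧ IsParabolic G P' ∧
    -- the quotient of `G ⧸ P` by `≈` is `G ⧸ P̃`:
    (∀ g h : G, (QuotientGroup.mk g : G ⧸ P') = QuotientGroup.mk h ↔
        Pcyc G P Q ((QuotientGroup.mk g : G ⧸ P)) = Pcyc G P Q (QuotientGroup.mk h)) := by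
  set S : Set (G ⧸ Q) := Pcyc G P Q ((1 : G) : G ⧸ P) with hS
  -- P ≤ P'
  have hle : P ≤ P' := by
    intro p hp
    rw [hP', MulAction.mem_stabilizer_iff]
    rw [← pcyc_smul, hS, ← mk_eq_smul_one]
    have hmk : ((p : G) : G ⧸ P) = ((1 : G) : G ⧸ P) :=
      QuotientGroup.eq.mpr (show p⁻¹ * 1 ∈ P by simpa using hp)
    rw [hmk]
  refine ⟨?_, ?_, hle, ⟨?_, ?_⟩, ?_⟩
  · -- equivariance
    intro g x y
    constructor
    · intro h; rw [pcyc_smul, pcyc_smul, h]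
    · intro h
      rw [pcyc_smul, pcyc_smul] at h
      exact smul_left_cancel g h
  · -- intersections
    intro x y
    refine ⟨fun h => by rw [h], fun h => ?_⟩
    have hx : x ∈ ⋂ s ∈ Pcyc G P Q x, cycleOf G P Q s := Set.mem_iInter₂.mpr fun s hs => hs
    have hy : y ∈ ⋂ s ∈ Pcyc G P Q y, cycleOf G P Q s := Set.mem_iInter₂.mpr fun s hs => hs
    have hy' : y ∈ ⋂ s ∈ Pcyc G P Q x, cycleOf G P Q s := h.symm ▸ hy
    have hx' : x ∈ ⋂ s ∈ Pcyc G P Q y, cycleOf G P Q s := h ▸ hx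
    apply subset_antisymm
    · intro s hs
      exact Set.mem_iInter₂.mp hy' s hs
    · intro s hs
      exact Set.mem_iInter₂.mp hx' s hs
  · -- P' closed
    have hT2 : T2Space (G ⧸ Q) := t2_coset Q hQ.1
    -- the set S is closed
    have hSclosed : IsClosed S := by
      have hKclosed : IsClosed (QuotientGroup.mk '' (P : Set G) : Set (G ⧸ (P ⊓ Q))) := by
        rw [← (QuotientGroup.isQuotientMap_mk (P ⊓ Q)).isClosed_preimage]
        have hpre : ((QuotientGroup.mk : G → G ⧸ (P ⊓ Q)) ⁻¹'
            (QuotientGroup.mk '' (P : Set G))) = (P : Set G) := by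
          ext g
          constructor
          · rintro ⟨p, hp, hpg⟩
            have hmem := QuotientGroup.eq.mp hpg
            have : p * (p⁻¹ * g) ∈ P := P.mul_mem hp hmem.1
            simpa using this
          · intro hg; exact ⟨g, hg, rfl⟩
        rw [hpre]; exact hP.1
      haveI := hPQ.2
      have hKcomp : IsCompact (QuotientGroup.mk '' (P : Set G) : Set (G ⧸ (P ⊓ Q))) :=
        hKclosed.isCompact
      have hScomp : IsCompact S := by
        have himg := hKcomp.image (continuous_cosetMap (P ⊓ Q) Q inf_le_right)
        have : cosetMap (P ⊓ Q) Q inf_le_right '' (QuotientGroup.mk '' (P : Set G)) = S := by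
          rw [hS, pcyc_one, ← Set.image_comp]
          rfl
        rwa [this] at himg
      exact hScomp.isClosed
    have hP'eq : (P' : Set G) =
        {g : G | ∀ s ∈ S, g • s ∈ S} ∩ {g : G | ∀ s ∈ S, g⁻¹ • s ∈ S} := by
      ext g
      simp only [hP', SetLike.mem_coe, MulAction.mem_stabilizer_iff, Set.mem_inter_iff,
        Set.mem_setOf_eq]
      constructor
      · intro h
        constructor
        · intro s hs
          rw [← h]
          exact Set.smul_mem_smul_set hs
        · intro s hs
          exact Set.mem_smul_set_iff_inv_smul_mem.mp (h.symm ▸ hs)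
      · rintro ⟨h₁, h₂⟩
        apply subset_antisymm
        · rintro x ⟨s, hs, rfl⟩
          exact h₁ s hs
        · intro s hs
          exact ⟨g⁻¹ • s, h₂ s hs, smul_inv_smul g s⟩
    have e1 : {g : G | ∀ s ∈ S, g • s ∈ S} = ⋂ s ∈ S, (fun g : G => g • s) ⁻¹' S := by
      ext g; simp
    have e2 : {g : G | ∀ s ∈ S, g⁻¹ • s ∈ S} = ⋂ s ∈ S, (fun g : G => g⁻¹ • s) ⁻¹' S := by
      ext g; simp
    rw [hP'eq, e1, e2]
    refine IsClosed.inter ?_ ?_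
    · exact isClosed_biInter fun s _ =>
        hSclosed.preimage (continuous_id.smul continuous_const)
    · exact isClosed_biInter fun s _ =>
        hSclosed.preimage (continuous_inv.smul continuous_const)
  · -- G ⧸ P' compact
    haveI := hP.2
    constructor
    have himg := (isCompact_univ : IsCompact (Set.univ : Set (G ⧸ P))).image
      (continuous_cosetMap P P' hle)
    rwa [Set.image_univ, (surjective_cosetMap P P' hle).range_eq] at himg
  · -- quotient description
    intro g h
    rw [QuotientGroup.eq, hP', MulAction.mem_stabilizer_iff]
    have hg : Pcyc G P Q (QuotientGroup.mk g : G ⧸ P) = g • S := by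
      rw [hS, ← pcyc_smul, ← mk_eq_smul_one]
    have hh : Pcyc G P Q (QuotientGroup.mk h : G ⧸ P) = h • S := by
      rw [hS, ← pcyc_smul, ← mk_eq_smul_one]
    rw [hg, hh]
    constructor
    · intro hgh
      calc g • S = g • ((g⁻¹ * h) • S) := by rw [hgh]
        _ = h • S := by rw [smul_smul, mul_inv_cancel_left]
    · intro hgh
      rw [mul_smul, ← hgh, inv_smul_smul]
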